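/- Let u, v ∈ ℝ be such that not both u and v are integers. Then for every z in the complex upper half-plane, φ(u, v, z) ≠ 0. -/

import Mathlib

open Complex Real

/-- The Siegel phi-function: for `u v : ℝ` and `z` in the upper half-plane, with
`γ = u·z + v`,
`φ(u,v,z) = -i·e^{πiz/6}·e^{πiuγ}·(e^{πiγ} - e^{-πiγ})·∏_{n≥1}(1-e^{2πi(nz+γ)})(1-e^{2πi(nz-γ)})`. -/
noncomputable def siegelPhi (u v : ℝ) (z : ℂ) : ℂ :=
  -I * Complex.exp ((π : ℂ) * I * z / 6) *
    Complex.exp ((π : ℂ) * I * (u : ℂ) * ((u : ℂ) * z + (v : ℂ))) *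
    (Complex.exp ((π : ℂ) * I * ((u : ℂ) * z + (v : ℂ))) -
      Complex.exp (-((π : ℂ) * I * ((u : ℂ) * z + (v : ℂ))))) *
    ∏' n : ℕ+,
      (1 - Complex.exp (2 * (π : ℂ) * I * ((n : ℂ) * z + ((u : ℂ) * z + (v : ℂ))))) *
      (1 - Complex.exp (2 * (π : ℂ) * I * ((n : ℂ) * z - ((u : ℂ) * z + (v : ℂ)))))

lemma aux_summable_log {ι : Type*} (f : ι → ℂ) (hf : Summable fun i => ‖f i‖) :
    Summable fun i => Complex.log (1 + f i) := by
  apply Summable.of_norm_bounded_eventually (g := fun i => 3/2 * ‖f i‖) (hf.mul_left _)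
  have h0 : ∀ᶠ i in Filter.cofinite, ‖f i‖ ≤ 1/2 :=
    hf.tendsto_cofinite_zero.eventually_le_const (by norm_num)
  filter_upwards [h0] with i hi
  exact Complex.norm_log_one_add_half_le_self hi

lemma aux_geom (c r : ℝ) (hr0 : 0 ≤ r) (hr : r < 1) :
    Summable fun n : ℕ+ => c * r ^ (n : ℕ) :=
  ((summable_geometric_of_lt_one hr0 hr).mul_left c).comp_injective
    (fun _ _ h => PNat.coe_injective h)

lemma aux_exp_eq_one {w : ℂ} (h : Complex.exp (2*(π:ℂ)*I*w) = 1) : ∃ k : ℤ, w = k := by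
  rw [Complex.exp_eq_one_iff] at h
  obtain ⟨k, hk⟩ := h
  refine ⟨k, ?_⟩
  have h2 : (2*(π:ℂ)*I) ≠ 0 := by
    simp [Real.pi_ne_zero, I_ne_zero, Complex.ofReal_ne_zero]
  apply mul_left_cancel₀ h2
  linear_combination hk

lemma aux_norm_exp (γ z : ℂ) (n : ℕ+) :
    ‖Complex.exp (2 * (π:ℂ) * I * ((n:ℂ)*z + γ))‖
      = Real.exp (-2*π*γ.im) * Real.exp (-2*π*z.im) ^ (n:ℕ) := by
  rw [← Real.exp_nat_mul, ← Real.exp_add, Complex.norm_exp]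
  congr 1
  simp [Complex.add_re, Complex.mul_re, Complex.mul_im, Complex.I_re, Complex.I_im,
    Complex.ofReal_re, Complex.ofReal_im]
  ring

lemma aux_norm_exp' (γ z : ℂ) (n : ℕ+) :
    ‖Complex.exp (2 * (π:ℂ) * I * ((n:ℂ)*z - γ))‖
      = Real.exp (2*π*γ.im) * Real.exp (-2*π*z.im) ^ (n:ℕ) := by
  have := aux_norm_exp (-γ) z n
  rw [show (n:ℂ)*z + -γ = (n:ℂ)*z - γ by ring] at this
  simpa using this

lemma tprod_factor_ne_zero (γ z : ℂ) (hz : 0 < z.im)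
    (h1 : ∀ n : ℕ+, Complex.exp (2*(π:ℂ)*I*((n:ℂ)*z + γ)) ≠ 1)
    (h2 : ∀ n : ℕ+, Complex.exp (2*(π:ℂ)*I*((n:ℂ)*z - γ)) ≠ 1) :
    (∏' n : ℕ+, (1 - Complex.exp (2*(π:ℂ)*I*((n:ℂ)*z + γ))) *
      (1 - Complex.exp (2*(π:ℂ)*I*((n:ℂ)*z - γ)))) ≠ 0 := by
  set a : ℕ+ → ℂ := fun n => Complex.exp (2*(π:ℂ)*I*((n:ℂ)*z + γ)) with ha
  set b : ℕ+ → ℂ := fun n => Complex.exp (2*(π:ℂ)*I*((n:ℂ)*z - γ)) with hb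
  set r : ℝ := Real.exp (-2*π*z.im) with hr
  have hr0 : 0 ≤ r := (Real.exp_pos _).le
  have hr1 : r < 1 := by
    rw [hr, Real.exp_lt_one_iff]
    nlinarith [Real.pi_pos, hz]
  have hna : ∀ n : ℕ+, ‖a n‖ = Real.exp (-2*π*γ.im) * r ^ (n:ℕ) := fun n => aux_norm_exp γ z n
  have hnb : ∀ n : ℕ+, ‖b n‖ = Real.exp (2*π*γ.im) * r ^ (n:ℕ) := fun n => aux_norm_exp' γ z n
  have hsa : Summable fun n : ℕ+ => ‖a n‖ :=
    (aux_geom _ r hr0 hr1).congr (fun n => (hna n).symm)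
  have hsb : Summable fun n : ℕ+ => ‖b n‖ :=
    (aux_geom _ r hr0 hr1).congr (fun n => (hnb n).symm)
  -- bound for ‖b n‖
  have hbB : ∀ n : ℕ+, ‖b n‖ ≤ Real.exp (2*π*γ.im) := by
    intro n
    rw [hnb n]
    calc Real.exp (2*π*γ.im) * r ^ (n:ℕ) ≤ Real.exp (2*π*γ.im) * 1 := by
          apply mul_le_mul_of_nonneg_left _ (Real.exp_pos _).le
          exact pow_le_one₀ hr0 hr1.le
      _ = Real.exp (2*π*γ.im) := mul_one _
  have hsw : Summable fun n : ℕ+ => ‖-(a n) - b n + a n * b n‖ := by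
    apply Summable.of_nonneg_of_le
      (f := fun n => ‖a n‖ + ‖b n‖ + Real.exp (2*π*γ.im) * ‖a n‖) (fun n => norm_nonneg _)
    · intro n
      calc ‖-(a n) - b n + a n * b n‖ ≤ ‖-(a n) - b n‖ + ‖a n * b n‖ := norm_add_le _ _
        _ ≤ (‖a n‖ + ‖b n‖) + ‖a n‖ * ‖b n‖ := by
            rw [norm_mul]
            gcongr
            calc ‖-(a n) - b n‖ ≤ ‖-(a n)‖ + ‖b n‖ := norm_sub_le _ _
              _ = ‖a n‖ + ‖b n‖ := by rw [norm_neg]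
        _ ≤ ‖a n‖ + ‖b n‖ + Real.exp (2*π*γ.im) * ‖a n‖ := by
            have := hbB n
            nlinarith [norm_nonneg (a n)]
    · exact (hsa.add hsb).add (hsa.mul_left _)
  have hlog : Summable fun n : ℕ+ => Complex.log ((1 - a n) * (1 - b n)) := by
    apply (aux_summable_log _ hsw).congr
    intro n
    congr 1
    ring
  have hFne : ∀ n : ℕ+, (1 - a n) * (1 - b n) ≠ 0 := fun n =>
    mul_ne_zero (sub_ne_zero_of_ne (Ne.symm (h1 n))) (sub_ne_zero_of_ne (Ne.symm (h2 n)))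
  have key := Complex.cexp_tsum_eq_tprod (f := fun (n : ℕ+) => (1 - a n) * (1 - b n))
    hFne hlog
  have h2' : (∏' n : ℕ+, (1 - a n) * (1 - b n))
      = Complex.exp (∑' n : ℕ+, Complex.log ((1 - a n) * (1 - b n))) :=
    key.symm
  show (∏' n : ℕ+, (1 - a n) * (1 - b n)) ≠ 0
  rw [h2']
  exact Complex.exp_ne_zero _

/-- If not both `u` and `v` are integers, then `φ(u,v,z) ≠ 0` on the upper half-plane. -/
theorem siegelPhi_ne_zero (u v : ℝ)
    (huv : ¬ ((∃ m : ℤ, u = (m : ℝ)) ∧ (∃ n : ℤ, v = (n : ℝ)))) (z : ℂ) (hz : 0 < z.im) :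
    siegelPhi u v z ≠ 0 := by
  unfold siegelPhi
  have hzim : z.im ≠ 0 := ne_of_gt hz
  -- the sinh-type factor
  have hS : Complex.exp ((π : ℂ) * I * ((u : ℂ) * z + (v : ℂ))) -
      Complex.exp (-((π : ℂ) * I * ((u : ℂ) * z + (v : ℂ)))) ≠ 0 := by
    intro h
    rw [sub_eq_zero] at h
    have h1 : Complex.exp (2*(π:ℂ)*I*((u:ℂ)*z + (v:ℂ))) = 1 := by
      rw [show 2*(π:ℂ)*I*((u:ℂ)*z + (v:ℂ)) =
        (π : ℂ) * I * ((u : ℂ) * z + (v : ℂ)) - -((π : ℂ) * I * ((u : ℂ) * z + (v : ℂ))) by ring,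
        Complex.exp_sub, h, div_self (Complex.exp_ne_zero _)]
    obtain ⟨k, hk⟩ := aux_exp_eq_one h1
    have him := congrArg Complex.im hk
    have hre := congrArg Complex.re hk
    simp [Complex.add_im, Complex.mul_im, Complex.add_re, Complex.mul_re] at him hre
    have hu : u = 0 := by
      rcases him with h' | h'
      · exact h'
      · exact absurd h' hzim
    rw [hu] at hre
    exact huv ⟨⟨0, by simpa using hu⟩, ⟨k, by linarith [hre]⟩⟩
  -- factors of the product
  have h1 : ∀ n : ℕ+, Complex.exp (2*(π:ℂ)*I*((n:ℂ)*z + ((u:ℂ)*z + (v:ℂ)))) ≠ 1 := by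
    intro n h
    obtain ⟨k, hk⟩ := aux_exp_eq_one h
    have him := congrArg Complex.im hk
    have hre := congrArg Complex.re hk
    simp [Complex.add_im, Complex.mul_im, Complex.add_re, Complex.mul_re] at him hre
    have hu : u = -(n:ℝ) := by
      rcases mul_eq_zero.1 (show ((n:ℝ) + u) * z.im = 0 by linarith [him]) with h' | h'
      · linarith
      · exact absurd h' hzim
    rw [hu] at hre
    refine huv ⟨⟨-(n:ℤ), by exact_mod_cast hu⟩, ⟨k, by linarith [hre]⟩⟩
  have h2 : ∀ n : ℕ+, Complex.exp (2*(π:ℂ)*I*((n:ℂ)*z - ((u:ℂ)*z + (v:ℂ)))) ≠ 1 := by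
    intro n h
    obtain ⟨k, hk⟩ := aux_exp_eq_one h
    have him := congrArg Complex.im hk
    have hre := congrArg Complex.re hk
    simp [Complex.sub_im, Complex.add_im, Complex.mul_im, Complex.sub_re, Complex.add_re,
      Complex.mul_re] at him hre
    have hu : u = (n:ℝ) := by
      rcases mul_eq_zero.1 (show ((n:ℝ) - u) * z.im = 0 by linarith [him]) with h' | h'
      · linarith
      · exact absurd h' hzim
    rw [hu] at hre
    refine huv ⟨⟨(n:ℤ), by exact_mod_cast hu⟩, ⟨-k, by push_cast; linarith [hre]⟩⟩
  have hP := tprod_factor_ne_zero ((u:ℂ)*z + (v:ℂ)) z hz h1 h2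
  refine mul_ne_zero (mul_ne_zero (mul_ne_zero (mul_ne_zero ?_ (Complex.exp_ne_zero _))
    (Complex.exp_ne_zero _)) hS) hP
  simp [I_ne_zero]
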